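/- Let T be a tilting A-module and B = End_A(T). Let X be in mod A and let 0→Y'→M→Y''→0 be a short exact sequence in mod A with Ext^1_A(Y'',T)=0. If the maps θ_{X,M} and θ_{X,Y''} are bijective, then θ_{X,Y'} is bijective. -/

import Mathlib

open CategoryTheory

section Defs

variable (R : Type) [Ring R]

/-- `M` belongs to `add T`: `M` is a direct summand of a finite direct power of `T`. -/
def InAdd (T M : Type) [AddCommGroup T] [Module R T] [AddCommGroup M] [Module R M] : Prop :=
  ∃ (n : ℕ) (ι : M →ₗ[R] (Fin n → T)) (ρ : (Fin n → T) →ₗ[R] M), ρ.comp ι = LinearMap.id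

/-- `M` is indecomposable: it is nonzero and not the direct sum of two nonzero submodules. -/
def IsIndec (M : Type) [AddCommGroup M] [Module R M] : Prop :=
  Nontrivial M ∧ ∀ p q : Submodule R M, IsCompl p q → p = ⊥ ∨ q = ⊥

/-- `M` is basic: it is the direct sum of pairwise non-isomorphic indecomposable modules. -/
def IsBasic (M : Type) [AddCommGroup M] [Module R M] : Prop :=
  ∃ (n : ℕ) (N : Fin n → Submodule R M), DirectSum.IsInternal N ∧
    (∀ i, IsIndec R (N i)) ∧ ∀ i j : Fin n, i ≠ j → IsEmpty ((N i) ≃ₗ[R] (N j))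

/-- Vanishing of the `i`-th Ext group `Ext^i(X,Y)` between two modules. -/
def ExtVanish (i : ℕ) (X Y : ModuleCat.{0} R) : Prop :=
  Limits.IsZero ((((_root_.Ext ℤ (ModuleCat.{0} R) i).obj (Opposite.op X)).obj Y))

/-- Projective dimension at most `n`, defined recursively via syzygies. -/
def pdLE {C : Type*} [Category C] [Abelian C] : ℕ → C → Prop
  | 0, M => Projective M
  | (n + 1), M => ∃ (P : C) (π : P ⟶ M), Epi π ∧ Projective P ∧ pdLE n (Limits.kernel π)

/-- Existence of a coresolution `0 → M → T¹ → ⋯ → Tʳ → 0` of length `≤ n`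
with all `Tʲ` in `add T`. -/
def CoresLE (T : Type) [AddCommGroup T] [Module R T] : ℕ → ModuleCat.{0} R → Prop
  | 0, M => InAdd R T M
  | (n + 1), M => ∃ (X : ModuleCat.{0} R) (f : M ⟶ X),
      Mono f ∧ InAdd R T X ∧ CoresLE T n (Limits.cokernel f)

/-- `T` is a tilting module: it lies in `mod R`, has finite projective dimension,
is selforthogonal, and `R` admits a finite coresolution by modules in `add T`. -/
def IsTilting (T : Type) [AddCommGroup T] [Module R T] : Prop :=
  Module.Finite R T ∧
  (∃ n, pdLE n (ModuleCat.of R T)) ∧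
  (∀ i : ℕ, 1 ≤ i → ExtVanish R i (ModuleCat.of R T) (ModuleCat.of R T)) ∧
  (∃ r, CoresLE R T r (ModuleCat.of R R))

/-- A vertex of the Hasse quiver `K_R`: a basic tilting module. -/
def IsBasicTilting (M : ModuleCat.{0} R) : Prop :=
  IsBasic R M ∧ IsTilting R M

/-- An arrow `M → N` in the Hasse quiver of basic tilting modules:
`M ≅ X ⊕ T̄`, `N ≅ Y ⊕ T̄` with `X`, `Y` indecomposable, and there is a non-split
short exact sequence `0 → X → E → Y → 0` with `E ∈ add T̄`. -/
def HasseArrow (M N : ModuleCat.{0} R) : Prop :=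
  IsBasicTilting R M ∧ IsBasicTilting R N ∧
  ∃ X Y E Tbar : ModuleCat.{0} R,
    IsIndec R X ∧ IsIndec R Y ∧
    Nonempty (M ≃ₗ[R] (X × Tbar)) ∧ Nonempty (N ≃ₗ[R] (Y × Tbar)) ∧
    InAdd R Tbar E ∧
    ∃ (ι : X →ₗ[R] E) (π : E →ₗ[R] Y),
      Function.Injective ι ∧ Function.Surjective π ∧ Function.Exact ι π ∧
      ¬ ∃ r : E →ₗ[R] X, r.comp ι = LinearMap.id

/-- There is an oriented path (possibly of length 0, and up to isomorphism)
from `M` to `N` in the Hasse quiver: `M` is a predecessor of `N`. -/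
def HassePath (M N : ModuleCat.{0} R) : Prop :=
  Relation.ReflTransGen
    (fun (P Q : ModuleCat.{0} R) => Nonempty (↥P ≃ₗ[R] ↥Q) ∨ HasseArrow R P Q) M N

/-- `R` (as an algebra) is connected: its only central idempotents are `0` and `1`. -/
def IsConnectedRing : Prop :=
  ∀ e : R, IsIdempotentElem e → (∀ a, a * e = e * a) → e = 0 ∨ e = 1

section Theta

variable (T : Type) [AddCommGroup T] [Module R T]

/-- The map `θ_{X,Y} : Hom_A(X,Y) → Hom_B(Hom_A(Y,T), Hom_A(X,T))`, `u ↦ Hom_A(u,T)`,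
where `B = End_A(T)` acts on `Hom_A(-,T)` by composition. -/
def thetaMap (X Y : Type) [AddCommGroup X] [Module R X] [AddCommGroup Y] [Module R Y]
    (u : X →ₗ[R] Y) : (Y →ₗ[R] T) →ₗ[Module.End R T] (X →ₗ[R] T) where
  toFun f := f.comp u
  map_add' _ _ := LinearMap.add_comp _ _ _
  map_smul' _ _ := rfl

/-- The evaluation map `X → Hom_B(Hom_A(X,T), T)`, `x ↦ (f ↦ f x)`,
as an `A`-linear map, where `B = End_A(T)`. -/
def evalMap (X : Type) [AddCommGroup X] [Module R X] :
    X →ₗ[R] ((X →ₗ[R] T) →ₗ[Module.End R T] T) where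
  toFun x :=
    { toFun := fun f => f x
      map_add' := fun _ _ => rfl
      map_smul' := fun _ _ => rfl }
  map_add' x y := by ext f; exact f.map_add x y
  map_smul' a x := by ext f; exact f.map_smul a x

end Theta

/-- Right multiplication by `x`, as an endomorphism of the left regular module. -/
def rightMulLin (x : R) : R →ₗ[R] R where
  toFun a := a * x
  map_add' a b := add_mul a b x
  map_smul' a b := by simp [smul_eq_mul, mul_assoc]

/-- `e` is a primitive idempotent. -/
def IsPrimitiveIdem (e : R) : Prop :=
  IsIdempotentElem e ∧ e ≠ 0 ∧
    ∀ f g : R, IsIdempotentElem f → IsIdempotentElem g → f * g = 0 → g * f = 0 →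
      f + g = e → f = 0 ∨ g = 0

/-- `e 0, …, e (n-1)` is a complete set of pairwise orthogonal primitive idempotents. -/
def IsCompleteOrthPrimIdems {n : ℕ} (e : Fin n → R) : Prop :=
  (∑ i, e i) = 1 ∧ (∀ i j : Fin n, i ≠ j → e i * e j = 0) ∧ ∀ i, IsPrimitiveIdem R (e i)

variable (k : Type) [Field k]

/-- The twisted module `N^ψ` (same underlying group, action `a * m = ψ a • m`) is
isomorphic to `N` as a module: there is an additive bijection `φ : N → N`
which is linear from `N^ψ` to `N`. -/
def TwistIso [Algebra k R] (ψ : R ≃ₐ[k] R) (N : Type) [AddCommGroup N] [Module R N] : Prop :=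
  ∃ φ : N ≃+ N, ∀ (a : R) (m : N), φ (ψ a • m) = a • φ m

/-- Condition `(H_{A,T})`: for every `k`-algebra automorphism `ψ` of `A` fixing each of the
idempotents `e i` and every direct summand `N` of `T`, one has `N^ψ ≅ N`. -/
def CondH [Algebra k R] {n : ℕ} (e : Fin n → R)
    (T : Type) [AddCommGroup T] [Module R T] : Prop :=
  ∀ ψ : R ≃ₐ[k] R, (∀ i, ψ (e i) = e i) →
    ∀ N : ModuleCat.{0} R,
      (∃ (ι : ↥N →ₗ[R] T) (ρ : T →ₗ[R] ↥N), ρ.comp ι = LinearMap.id) →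
      TwistIso R k ψ ↥N

end Defs


section AuxLemmas
open Limits

variable {A : Type} [Ring A] {Y' M Y'' T : Type}
  [AddCommGroup Y'] [Module A Y'] [AddCommGroup M] [Module A M]
  [AddCommGroup Y''] [Module A Y''] [AddCommGroup T] [Module A T]

private lemma aux_ext_lift (f : Y' →ₗ[A] M) (g : M →ₗ[A] Y'')
    (hf : Function.Injective f) (hg : Function.Surjective g) (hfg : Function.Exact f g)
    (hext : IsZero (((_root_.Ext ℤ (ModuleCat.{0} A) 1).obj
      (Opposite.op (ModuleCat.of A Y''))).obj (ModuleCat.of A T)))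
    (h : Y' →ₗ[A] T) : ∃ ψ : M →ₗ[A] T, ψ ∘ₗ f = h := by
  classical
  set Z := ModuleCat.of A Y''
  set Th := ModuleCat.of A T
  set Mh := ModuleCat.of A M
  let P : ProjectiveResolution Z := (HasProjectiveResolution.out (Z := Z)).some
  set Q := P.complex.linearYonedaObj ℤ Th with hQ
  have hzero : IsZero (Q.homology 1) := hext.of_iso (P.isoExt 1 Th).symm
  have hexQ : (Q.sc' 0 1 2).Exact := by
    rw [← HomologicalComplex.exactAt_iff' Q 0 1 2 (by simp) (by simp),
      HomologicalComplex.exactAt_iff_isZero_homology]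
    exact hzero
  let gC : Mh ⟶ Z := ModuleCat.ofHom g
  haveI : Epi gC := (ModuleCat.epi_iff_surjective gC).2 hg
  let π0 : P.complex.X 0 ⟶ Mh := @Projective.factorThru _ _ _ _ _ _ (P.π.f 0) gC this
  have hπ0 : π0 ≫ gC = P.π.f 0 := @Projective.factorThru_comp _ _ _ _ _ _ (P.π.f 0) gC this
  -- plain-module versions
  let π0' : ↑(P.complex.X 0) →ₗ[A] M := π0.hom
  have hgπ0 : ∀ p, g (π0' p) = P.π.f 0 p := fun p => congrArg (fun φ => ModuleCat.Hom.hom φ p) hπ0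
  have hker : ∀ q : ↑(P.complex.X 1), g (π0' (P.complex.d 1 0 q)) = 0 := by
    intro q
    rw [hgπ0]
    have h1 : P.π.f 0 (P.complex.d 1 0 q) = (P.complex.d 1 0 ≫ P.π.f 0) q := rfl
    rw [h1, P.complex_d_comp_π_f_zero]
    rfl
  let e : Y' ≃ₗ[A] LinearMap.range f := LinearEquiv.ofInjective f hf
  let π0d : ↑(P.complex.X 1) →ₗ[A] M :=
    π0'.comp (P.complex.d 1 0).hom
  have hmem : ∀ q : ↑(P.complex.X 1), π0d q ∈ LinearMap.range f := by
    intro q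
    rw [← LinearMap.exact_iff.mp hfg]
    exact LinearMap.mem_ker.mpr (hker q)
  let π1 : ↑(P.complex.X 1) →ₗ[A] Y' :=
    (e.symm : LinearMap.range f →ₗ[A] Y').comp (π0d.codRestrict (LinearMap.range f) hmem)
  have hπ1 : ∀ q, f (π1 q) = π0' (P.complex.d 1 0 q) := by
    intro q
    show f (e.symm ⟨π0d q, hmem q⟩) = π0d q
    have h2 : ∀ y : LinearMap.range f, f (e.symm y) = y := fun y =>
      congrArg Subtype.val (e.apply_symm_apply y)
    exact h2 _
  let φ : P.complex.X 1 ⟶ Th := ModuleCat.ofHom (h.comp π1)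
  have hπ1d : ∀ q'' : ↑(P.complex.X 2), π1 (P.complex.d 2 1 q'') = 0 := by
    intro q''
    apply hf
    rw [hπ1, map_zero]
    have h3 : π0' (P.complex.d 1 0 (P.complex.d 2 1 q'')) =
        π0' ((P.complex.d 2 1 ≫ P.complex.d 1 0) q'') := rfl
    rw [h3, P.complex.d_comp_d]
    exact map_zero _
  have hφ : Q.d 1 2 φ = 0 := by
    show P.complex.d 2 1 ≫ φ = 0
    apply ModuleCat.hom_ext
    apply LinearMap.ext
    intro q''
    show h (π1 (P.complex.d 2 1 q'')) = 0
    rw [hπ1d, map_zero]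
  obtain ⟨ψ0, hψ0⟩ : ∃ ψ0 : P.complex.X 0 ⟶ Th, P.complex.d 1 0 ≫ ψ0 = φ := by
    have h4 := (ShortComplex.moduleCat_exact_iff _).1 hexQ φ hφ
    obtain ⟨ψ0, hψ0⟩ := h4
    exact ⟨ψ0, hψ0⟩
  let ψ0' : ↑(P.complex.X 0) →ₗ[A] T := ψ0.hom
  have hψ0' : ∀ q : ↑(P.complex.X 1), ψ0' (P.complex.d 1 0 q) = h (π1 q) := fun q =>
    congrArg (fun φ => ModuleCat.Hom.hom φ q) hψ0
  -- exactness of the resolution at degree 0, elementwise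
  have hex0 : ∀ p : ↑(P.complex.X 0), P.π.f 0 p = 0 →
      ∃ q : ↑(P.complex.X 1), P.complex.d 1 0 q = p := fun p hp =>
    (ShortComplex.moduleCat_exact_iff _).1 P.exact₀ p hp
  have hπf0surj : Function.Surjective (P.π.f 0) :=
    (ModuleCat.epi_iff_surjective (P.π.f 0)).1 inferInstance
  let ρ : (↑(P.complex.X 0) × Y') →ₗ[A] M := LinearMap.coprod π0' f
  let σ : (↑(P.complex.X 0) × Y') →ₗ[A] T := LinearMap.coprod ψ0' h
  have hρap : ∀ x : ↑(P.complex.X 0) × Y', ρ x = π0' x.1 + f x.2 := fun _ => rfl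
  have hσap : ∀ x : ↑(P.complex.X 0) × Y', σ x = ψ0' x.1 + h x.2 := fun _ => rfl
  have hρ : Function.Surjective ρ := by
    intro m
    obtain ⟨p, hp⟩ := hπf0surj (g m)
    have h2 : g (m - π0' p) = 0 := by rw [map_sub, hgπ0, hp, sub_self]
    obtain ⟨y, hy⟩ : m - π0' p ∈ LinearMap.range f := by
      rw [← LinearMap.exact_iff.mp hfg]
      exact LinearMap.mem_ker.mpr h2
    exact ⟨(p, y), by rw [hρap, hy]; abel⟩
  have hle : ∀ x, ρ x = 0 → σ x = 0 := by
    rintro ⟨p, y⟩ hx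
    rw [hρap] at hx
    have hgf : g (f y) = 0 := hfg.apply_apply_eq_zero y
    have hp0 : P.π.f 0 p = 0 := by
      have h4 : g (π0' p + f y) = 0 := by rw [hx]; simp
      rw [map_add, hgπ0, hgf] at h4
      exact (add_zero _).symm.trans h4
    obtain ⟨q, hq⟩ := hex0 p hp0
    have hy : y = -π1 q := by
      apply hf
      have h5 : f y = -π0' (P.complex.d 1 0 q) := by
        rw [hq]; rw [eq_neg_iff_add_eq_zero, add_comm]; exact hx
      rw [h5, map_neg, hπ1]
    rw [hσap, ← hq, hψ0', hy, map_neg, add_neg_cancel]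
  have hleker : LinearMap.ker ρ ≤ LinearMap.ker σ := fun x hx =>
    LinearMap.mem_ker.mpr (hle x (LinearMap.mem_ker.mp hx))
  let E := LinearMap.quotKerEquivOfSurjective ρ hρ
  let ψ : M →ₗ[A] T := ((LinearMap.ker ρ).liftQ σ hleker).comp (E.symm : M →ₗ[A] _)
  have key : ∀ x, ψ (ρ x) = σ x := by
    intro x
    have hE : E (Submodule.Quotient.mk x) = ρ x := by
      simp [E, LinearMap.quotKerEquivOfSurjective]
    have hE' : E.symm (ρ x) = Submodule.Quotient.mk x := by
      apply E.injective; rw [E.apply_symm_apply, hE]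
    show ((LinearMap.ker ρ).liftQ σ hleker) (E.symm (ρ x)) = σ x
    rw [hE']
    exact Submodule.liftQ_apply _ _ _
  refine ⟨ψ, LinearMap.ext fun y => ?_⟩
  have h5 : ρ (0, y) = f y := by rw [hρap]; simp
  show ψ (f y) = h y
  rw [← h5, key, hσap]
  simp

end AuxLemmas

section AuxMain

variable {A : Type} [Ring A] {Y' M Y'' T X : Type}
  [AddCommGroup Y'] [Module A Y'] [AddCommGroup M] [Module A M]
  [AddCommGroup Y''] [Module A Y''] [AddCommGroup T] [Module A T]
  [AddCommGroup X] [Module A X]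

private theorem aux_main (f : Y' →ₗ[A] M) (g : M →ₗ[A] Y'')
    (hf : Function.Injective f) (hg : Function.Surjective g) (hfg : Function.Exact f g)
    (hlift : ∀ h : Y' →ₗ[A] T, ∃ ψ : M →ₗ[A] T, ψ ∘ₗ f = h)
    (h1 : Function.Bijective (thetaMap A T X M))
    (h2 : Function.Bijective (thetaMap A T X Y'')) :
    Function.Bijective (thetaMap A T X Y') := by
  constructor
  · intro u v huv
    have hfu : thetaMap A T X M (f ∘ₗ u) = thetaMap A T X M (f ∘ₗ v) := by
      apply LinearMap.ext
      intro ψ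
      show ψ.comp (f.comp u) = ψ.comp (f.comp v)
      rw [← LinearMap.comp_assoc, ← LinearMap.comp_assoc]
      exact congrArg (fun w => w) (DFunLike.congr_fun huv (ψ.comp f))
    have := h1.1 hfu
    apply LinearMap.ext
    intro x
    apply hf
    exact DFunLike.congr_fun this x
  · intro φ
    let Φ : (M →ₗ[A] T) →ₗ[Module.End A T] (X →ₗ[A] T) := φ.comp (thetaMap A T Y' M f)
    obtain ⟨u, hu⟩ := h1.2 Φ
    have hgu : g ∘ₗ u = 0 := by
      have hθ : thetaMap A T X Y'' (g ∘ₗ u) = thetaMap A T X Y'' 0 := by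
        apply LinearMap.ext
        intro h''
        show h''.comp (g.comp u) = h''.comp (0 : X →ₗ[A] Y'')
        have e1 : h''.comp (g.comp u) = (h''.comp g).comp u := by
          rw [LinearMap.comp_assoc]
        have e2 : (h''.comp g).comp u = (thetaMap A T X M u) (h''.comp g) := rfl
        rw [e1, e2, hu]
        have e3 : Φ (h''.comp g) = φ ((h''.comp g).comp f) := rfl
        have e4 : (h''.comp g).comp f = 0 := by
          apply LinearMap.ext
          intro y
          show h'' (g (f y)) = 0
          rw [hfg.apply_apply_eq_zero, map_zero]
        rw [e3, e4, map_zero]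
        apply LinearMap.ext
        intro x
        simp
      exact h2.1 hθ
    have hmem : ∀ x, u x ∈ LinearMap.range f := by
      intro x
      rw [← LinearMap.exact_iff.mp hfg]
      exact LinearMap.mem_ker.mpr (DFunLike.congr_fun hgu x)
    let e : Y' ≃ₗ[A] LinearMap.range f := LinearEquiv.ofInjective f hf
    let v : X →ₗ[A] Y' :=
      (e.symm : LinearMap.range f →ₗ[A] Y').comp (u.codRestrict (LinearMap.range f) hmem)
    have hv : ∀ x, f (v x) = u x := by
      intro x
      show f (e.symm ⟨u x, hmem x⟩) = u x
      have h2' : ∀ y : LinearMap.range f, f (e.symm y) = y := fun y =>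
        congrArg Subtype.val (e.apply_symm_apply y)
      exact h2' _
    refine ⟨v, ?_⟩
    apply LinearMap.ext
    intro h'
    obtain ⟨ψ, hψ⟩ := hlift h'
    show h'.comp v = φ h'
    have e5 : φ h' = φ (ψ ∘ₗ f) := by rw [hψ]
    have e6 : φ (ψ ∘ₗ f) = Φ ψ := rfl
    have e7 : Φ ψ = (thetaMap A T X M u) ψ := by rw [hu]
    rw [e5, e6, e7]
    show h'.comp v = ψ.comp u
    apply LinearMap.ext
    intro x
    show h' (v x) = ψ (u x)
    rw [← hv x, ← hψ]
    rfl

end AuxMain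

/-- Let `T` be a tilting `A`-module, `B = End_A(T)`, `X ∈ mod A`, and
`0 → Y' → M → Y'' → 0` a short exact sequence in `mod A` with `Ext¹_A(Y'',T) = 0`.
If `θ_{X,M}` and `θ_{X,Y''}` are bijective, then `θ_{X,Y'}` is bijective. -/
theorem stmt_2 (k : Type) [Field k] (A : Type) [Ring A] [Algebra k A] [FiniteDimensional k A]
    (hAbasic : IsBasic A A) (hAconn : IsConnectedRing A)
    (T : Type) [AddCommGroup T] [Module A T] [Module.Finite A T]
    (hT : IsTilting A T)
    (X : Type) [AddCommGroup X] [Module A X] [Module.Finite A X]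
    (Y' : Type) [AddCommGroup Y'] [Module A Y'] [Module.Finite A Y']
    (M : Type) [AddCommGroup M] [Module A M] [Module.Finite A M]
    (Y'' : Type) [AddCommGroup Y''] [Module A Y''] [Module.Finite A Y'']
    (f : Y' →ₗ[A] M) (g : M →ₗ[A] Y'')
    (hf : Function.Injective f) (hg : Function.Surjective g) (hfg : Function.Exact f g)
    (hext : ExtVanish A 1 (ModuleCat.of A Y'') (ModuleCat.of A T))
    (h1 : Function.Bijective (thetaMap A T X M))
    (h2 : Function.Bijective (thetaMap A T X Y'')) :
    Function.Bijective (thetaMap A T X Y') := by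
  exact aux_main f g hf hg hfg (fun h => aux_ext_lift f g hf hg hfg hext h) h1 h2
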